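/- If H is a uniform central graph with radius r, centered periphery inducing P, and κ is the minimum size of a covering of P satisfying condition A, then the number of intermediate vertices of H satisfies |I(H)| ≥ κ(r − 1), where I(H) = V(H) − (Z(H) ∪ CP(H)). -/

import Mathlib

open SimpleGraph

variable {V : Type*} {ι : Type*}

/-- Eccentricity (in `ℕ∞`) of a vertex. -/
noncomputable def gecc (G : SimpleGraph V) (v : V) : ℕ∞ := ⨆ u, G.edist v u

/-- Radius of a graph. -/
noncomputable def grad (G : SimpleGraph V) : ℕ∞ := ⨅ v, gecc G v

/-- Diameter of a graph. -/
noncomputable def gdiam (G : SimpleGraph V) : ℕ∞ := ⨆ v, gecc G v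

/-- The center: vertices of minimum eccentricity. -/
def gcenter (G : SimpleGraph V) : Set V := {v | gecc G v = grad G}

/-- Eccentric vertices of `v`. -/
def eccSet (G : SimpleGraph V) (v : V) : Set V := {u | G.edist v u = gecc G v}

/-- The centered periphery. -/
def cperiph (G : SimpleGraph V) : Set V := ⋃ z ∈ gcenter G, eccSet G z

/-- Uniform central graph. -/
def IsUCG (G : SimpleGraph V) : Prop := ∀ c ∈ gcenter G, eccSet G c = cperiph G

/-- Condition A. -/
def CondA (G : SimpleGraph V) (P : ι → Set V) : Prop :=
  ∀ i, ∃ p, p ∉ P i ∧ ∀ q ∈ P i, 2 ≤ G.edist q p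

/-- Condition B. -/
def CondB (G : SimpleGraph V) (P : ι → Set V) : Prop :=
  ∀ i, ∀ p ∈ P i,
    (∃ p', p' ∉ P i ∧ 3 ≤ G.edist p p') ∨ (∃ j, j ≠ i ∧ ∀ q ∈ P j, 2 ≤ G.edist p q)

/-- Condition A′. -/
def CondA' (G : SimpleGraph V) (P : ι → Set V) : Prop :=
  ∀ i, (∃ p, p ∉ P i ∧ ∀ q ∈ P i, 3 ≤ G.edist q p) ∨
    (∃ j, j ≠ i ∧ ∀ q ∈ P i, ∀ q' ∈ P j, 2 ≤ G.edist q q')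

/-- Condition B′. -/
def CondB' (G : SimpleGraph V) (P : ι → Set V) : Prop :=
  ∀ i, ∀ p ∈ P i, ∃ j, j ≠ i ∧ ∀ q ∈ P j, 2 ≤ G.edist p q

/-- Minimum size of a covering satisfying condition A. -/
noncomputable def covA (G : SimpleGraph V) : ℕ :=
  sInf {k | ∃ P : Fin k → Set V, (⋃ i, P i) = Set.univ ∧ CondA G P}

/-- Minimum size of a covering satisfying conditions A and B. -/
noncomputable def covAB (G : SimpleGraph V) : ℕ :=
  sInf {k | ∃ P : Fin k → Set V, (⋃ i, P i) = Set.univ ∧ CondA G P ∧ CondB G P}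

/-- Distance from a vertex to the center. -/
noncomputable def distToCenter (G : SimpleGraph V) (u : V) : ℕ∞ :=
  ⨅ z ∈ gcenter G, G.edist u z

/-- The set of vertices at distance exactly `m` from the center. -/
def Dlevel (G : SimpleGraph V) (m : ℕ) : Set V := {u | distToCenter G u = (m : ℕ∞)}

/-- Vertices of the centered periphery lying on a radial path through `x`. -/
def Pset (G : SimpleGraph V) (r : ℕ) (x : V) : Set V :=
  {p | p ∈ cperiph G ∧ ∃ c ∈ gcenter G, ∃ W : G.Walk c p,
    W.IsPath ∧ W.length = r ∧ x ∈ W.support}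

/-- All vertices lying on some radial path through `x`. -/
def radialSupport (G : SimpleGraph V) (r : ℕ) (x : V) : Set V :=
  {u | ∃ c ∈ gcenter G, ∃ p ∈ cperiph G, ∃ W : G.Walk c p,
    W.IsPath ∧ W.length = r ∧ x ∈ W.support ∧ u ∈ W.support}

section AuxLemmas

variable {V : Type*}

private lemma enat_cancel {a b : ℕ} {E : ℕ∞} (h : ((a + b : ℕ) : ℕ∞) ≤ (a : ℕ∞) + E) :
    (b : ℕ∞) ≤ E := by
  rw [Nat.cast_add] at h
  exact (WithTop.add_le_add_iff_left (ENat.coe_ne_top a)).mp h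

private lemma two_le_edist_of_ne_of_not_adj {G : SimpleGraph V} {u v : V}
    (hne : u ≠ v) (hadj : ¬ G.Adj u v) : 2 ≤ G.edist u v := by
  have h0 : G.edist u v ≠ 0 := by simpa [edist_eq_zero_iff] using hne
  have h1 : G.edist u v ≠ 1 := by simpa [edist_eq_one_iff_adj] using hadj
  have hlt : 1 < G.edist u v :=
    lt_of_le_of_ne (Order.one_le_iff_pos.mpr (pos_iff_ne_zero.mpr h0)) (Ne.symm h1)
  have := Order.add_one_le_of_lt hlt
  simpa [one_add_one_eq_two] using this

/-- Splitting a geodesic: if `edist u v = a + b` then there is a midpoint. -/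
private lemma exists_mid (G : SimpleGraph V) : ∀ (a : ℕ) {b : ℕ} {u v : V},
    G.edist u v = ((a + b : ℕ) : ℕ∞) →
    ∃ x, G.edist u x = (a : ℕ∞) ∧ G.edist x v = (b : ℕ∞) := by
  intro a
  induction a with
  | zero =>
    intro b u v h
    exact ⟨u, by simp [edist_self], by simpa using h⟩
  | succ n ih =>
    intro b u v h
    obtain ⟨W, hW⟩ := SimpleGraph.exists_walk_of_edist_eq_coe h
    cases W with
    | nil => simp at hW; omega
    | @cons _ w _ hadj W' =>
      have hW'' : W'.length + 1 = n + 1 + b := by simpa using hW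
      have hW' : W'.length = n + b := by omega
      have h1 : G.edist w v ≤ ((n + b : ℕ) : ℕ∞) := by
        rw [← hW']; exact SimpleGraph.edist_le W'
      have h2 : ((1 + (n + b) : ℕ) : ℕ∞) ≤ (1 : ℕ∞) + G.edist w v := by
        have ht : G.edist u v ≤ G.edist u w + G.edist w v := SimpleGraph.edist_triangle
        have huw : G.edist u w ≤ 1 := (SimpleGraph.edist_eq_one_iff_adj.mpr hadj).le
        calc ((1 + (n + b) : ℕ) : ℕ∞) = ((n + 1 + b : ℕ) : ℕ∞) := by norm_cast; omega
          _ = G.edist u v := h.symm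
          _ ≤ G.edist u w + G.edist w v := ht
          _ ≤ 1 + G.edist w v := by gcongr
      have heq : G.edist w v = ((n + b : ℕ) : ℕ∞) := by
        refine le_antisymm h1 ?_
        have := enat_cancel (a := 1) (b := n + b) (by exact_mod_cast h2)
        exact this
      obtain ⟨x, hx1, hx2⟩ := ih heq
      refine ⟨x, ?_, hx2⟩
      refine le_antisymm ?_ ?_
      · calc G.edist u x ≤ G.edist u w + G.edist w x := SimpleGraph.edist_triangle
          _ ≤ 1 + (n : ℕ∞) := by
              gcongr
              · exact (SimpleGraph.edist_eq_one_iff_adj.mpr hadj).le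
              · exact hx1.le
          _ = ((n + 1 : ℕ) : ℕ∞) := by norm_cast; omega
      · have ht : G.edist u v ≤ G.edist u x + G.edist x v := SimpleGraph.edist_triangle
        rw [h, hx2] at ht
        have hcomm : ((b + (n + 1) : ℕ) : ℕ∞) ≤ (b : ℕ∞) + G.edist u x := by
          calc ((b + (n + 1) : ℕ) : ℕ∞) = ((n + 1 + b : ℕ) : ℕ∞) := by norm_cast; omega
            _ ≤ G.edist u x + (b : ℕ∞) := ht
            _ = (b : ℕ∞) + G.edist u x := add_comm _ _
        exact enat_cancel hcomm

private lemma gecc_exists [Finite V] [Nonempty V] (G : SimpleGraph V) (c : V) :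
    ∃ u, G.edist c u = gecc G c := by
  obtain ⟨u, hu⟩ := Finite.exists_max (G.edist c)
  exact ⟨u, le_antisymm (le_iSup _ u) (iSup_le hu)⟩

private lemma center_nonempty [Finite V] [Nonempty V] (G : SimpleGraph V) :
    ∃ c, c ∈ gcenter G := by
  obtain ⟨c, hc⟩ := Finite.exists_min (gecc G)
  exact ⟨c, le_antisymm (le_iInf hc) (iInf_le _ c)⟩

private lemma edist_center_cperiph {G : SimpleGraph V} (hUCG : IsUCG G) {c p : V}
    (hc : c ∈ gcenter G) (hp : p ∈ cperiph G) : G.edist c p = grad G := by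
  have hmem : p ∈ eccSet G c := by rw [hUCG c hc]; exact hp
  have : G.edist c p = gecc G c := hmem
  rw [this]; exact hc

private lemma edist_center_le {G : SimpleGraph V} {c u : V} (hc : c ∈ gcenter G) :
    G.edist c u ≤ grad G := by
  have h1 : G.edist c u ≤ gecc G c := le_iSup (G.edist c) u
  rwa [hc] at h1

private lemma distToCenter_exists [Finite V] {G : SimpleGraph V}
    (hne : ∃ c, c ∈ gcenter G) (u : V) :
    ∃ c ∈ gcenter G, G.edist u c = distToCenter G u := by
  obtain ⟨c, hc, hmin⟩ := Set.exists_min_image (gcenter G) (G.edist u) (Set.toFinite _) hne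
  exact ⟨c, hc, le_antisymm (le_iInf₂ hmin) (iInf₂_le c hc)⟩

/-- Key lemma: a vertex at level `m ≥ 1` (with `m + s = r`) has a centered-periphery vertex
at distance at least `s + 2`. -/
private lemma key_far [Finite V] {G : SimpleGraph V} (hconn : G.Connected) (hUCG : IsUCG G)
    {r m s : ℕ} (hr : grad G = (r : ℕ∞)) (hm : 1 ≤ m) (hms : m + s = r)
    {x : V} (hx : distToCenter G x = (m : ℕ∞)) :
    ∃ w ∈ cperiph G, ((s + 2 : ℕ) : ℕ∞) ≤ G.edist x w := by
  haveI : Nonempty V := hconn.nonempty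
  obtain ⟨c₀, hc₀, hc₀x⟩ := distToCenter_exists (center_nonempty G) x
  rw [hx] at hc₀x
  -- vertex v₁ at distance 1 from c₀ and m-1 from x
  have hsplit : G.edist c₀ x = ((1 + (m - 1) : ℕ) : ℕ∞) := by
    rw [SimpleGraph.edist_comm, hc₀x]; norm_cast; omega
  obtain ⟨v₁, hv₁c, hv₁x⟩ := exists_mid G 1 hsplit
  -- v₁ is not central
  have hv₁nc : v₁ ∉ gcenter G := by
    intro hmem
    have h1 : distToCenter G x ≤ G.edist x v₁ := iInf₂_le v₁ hmem
    rw [hx, SimpleGraph.edist_comm, hv₁x] at h1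
    have : m ≤ m - 1 := by exact_mod_cast h1
    omega
  -- eccentricity of v₁ is at least r+1
  have hge : ((r + 1 : ℕ) : ℕ∞) ≤ gecc G v₁ := by
    have h1 : grad G ≤ gecc G v₁ := iInf_le _ v₁
    have h2 : grad G ≠ gecc G v₁ := fun h => hv₁nc h.symm
    have h3 : (r : ℕ∞) < gecc G v₁ := hr ▸ lt_of_le_of_ne h1 h2
    have := Order.add_one_le_of_lt h3
    exact_mod_cast this
  obtain ⟨w, hw⟩ := gecc_exists G v₁
  have hv₁w : ((r + 1 : ℕ) : ℕ∞) ≤ G.edist v₁ w := hw ▸ hge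
  -- w is in the centered periphery
  have hc₀w : G.edist c₀ w = (r : ℕ∞) := by
    refine le_antisymm (hr ▸ edist_center_le hc₀) ?_
    refine enat_cancel (a := 1) (b := r) ?_
    calc ((1 + r : ℕ) : ℕ∞) = ((r + 1 : ℕ) : ℕ∞) := by norm_cast; omega
      _ ≤ G.edist v₁ w := hv₁w
      _ ≤ G.edist v₁ c₀ + G.edist c₀ w := SimpleGraph.edist_triangle
      _ ≤ 1 + G.edist c₀ w := by
          gcongr
          rw [SimpleGraph.edist_comm]; exact hv₁c.le
  have hwCP : w ∈ cperiph G := by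
    rw [← hUCG c₀ hc₀]
    show G.edist c₀ w = gecc G c₀
    rw [hc₀w, hc₀, hr]
  refine ⟨w, hwCP, ?_⟩
  refine enat_cancel (a := m - 1) (b := s + 2) ?_
  calc (((m - 1) + (s + 2) : ℕ) : ℕ∞) = ((r + 1 : ℕ) : ℕ∞) := by norm_cast; omega
    _ ≤ G.edist v₁ w := hv₁w
    _ ≤ G.edist v₁ x + G.edist x w := SimpleGraph.edist_triangle
    _ ≤ ((m - 1 : ℕ) : ℕ∞) + G.edist x w := by gcongr; exact hv₁x.le

/-- Every centered-periphery vertex is within distance `s` of some level-`m` vertex. -/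
private lemma cover_exists [Finite V] {G : SimpleGraph V} (hconn : G.Connected)
    (hUCG : IsUCG G) {r m s : ℕ} (hr : grad G = (r : ℕ∞)) (hms : m + s = r)
    {p : V} (hp : p ∈ cperiph G) :
    ∃ x, distToCenter G x = (m : ℕ∞) ∧ G.edist x p ≤ (s : ℕ∞) := by
  haveI : Nonempty V := hconn.nonempty
  obtain ⟨c, hc⟩ := center_nonempty G
  have hcp : G.edist c p = ((m + s : ℕ) : ℕ∞) := by
    rw [edist_center_cperiph hUCG hc hp, hr]; norm_cast; omega
  obtain ⟨x, hx1, hx2⟩ := exists_mid G m hcp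
  refine ⟨x, ?_, hx2.le⟩
  refine le_antisymm ?_ (le_iInf₂ fun z hz => ?_)
  · have h1 : distToCenter G x ≤ G.edist x c := iInf₂_le c hc
    rwa [SimpleGraph.edist_comm (u := x) (v := c), hx1] at h1
  · -- for each center z, edist x z ≥ m
    have hzp : G.edist z p = ((s + m : ℕ) : ℕ∞) := by
      rw [edist_center_cperiph hUCG hz hp, hr]; norm_cast; omega
    refine enat_cancel (a := s) (b := m) ?_
    calc ((s + m : ℕ) : ℕ∞) = G.edist z p := hzp.symm
      _ ≤ G.edist z x + G.edist x p := SimpleGraph.edist_triangle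
      _ ≤ G.edist z x + (s : ℕ∞) := by gcongr; exact hx2.le
      _ = (s : ℕ∞) + G.edist x z := by rw [add_comm, SimpleGraph.edist_comm]

private lemma distToCenter_cperiph [Finite V] {G : SimpleGraph V} (hconn : G.Connected)
    (hUCG : IsUCG G) {p : V} (hp : p ∈ cperiph G) : distToCenter G p = grad G := by
  haveI : Nonempty V := hconn.nonempty
  obtain ⟨c, hc⟩ := center_nonempty G
  refine le_antisymm ?_ (le_iInf₂ fun z hz => ?_)
  · have h1 : distToCenter G p ≤ G.edist p c := iInf₂_le c hc
    rwa [SimpleGraph.edist_comm (u := p) (v := c), edist_center_cperiph hUCG hc hp] at h1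
  · rw [SimpleGraph.edist_comm, edist_center_cperiph hUCG hz hp]

end AuxLemmas

/-- The number of intermediate vertices of a UCG is at least `κ(r − 1)`, where `κ` is the
minimum size of a condition-A covering of the induced centered periphery. -/
theorem stmt7 [Fintype V] (G : SimpleGraph V) (hconn : G.Connected) (hUCG : IsUCG G)
    {r : ℕ} (hr : grad G = (r : ℕ∞)) :
    covA (G.induce (cperiph G)) * (r - 1) ≤
      (Set.univ \ (gcenter G ∪ cperiph G)).ncard := by
  classical
  rcases Nat.lt_or_ge r 2 with hr2 | hr2
  · have h0 : r - 1 = 0 := by omega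
    simp [h0]
  haveI : Nonempty V := hconn.nonempty
  set I : Set V := Set.univ \ (gcenter G ∪ cperiph G) with hIdef
  -- each level is inside I
  have hsub : ∀ m ∈ Finset.Icc 1 (r - 1), Dlevel G m ⊆ I := by
    intro m hm v hv
    rw [Finset.mem_Icc] at hm
    have hv' : distToCenter G v = (m : ℕ∞) := hv
    refine ⟨Set.mem_univ v, ?_⟩
    rintro (hvc | hvp)
    · have h1 : distToCenter G v ≤ G.edist v v := iInf₂_le v hvc
      rw [SimpleGraph.edist_self, hv'] at h1
      have : m = 0 := by exact_mod_cast le_antisymm h1 zero_le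
      omega
    · have := distToCenter_cperiph hconn hUCG hvp
      rw [hv', hr] at this
      have : m = r := by exact_mod_cast this
      omega
  -- covA is at most the size of each level
  have hκ : ∀ m ∈ Finset.Icc 1 (r - 1),
      covA (G.induce (cperiph G)) ≤ (Dlevel G m).ncard := by
    intro m hm
    rw [Finset.mem_Icc] at hm
    obtain ⟨hm1, hm2⟩ := hm
    set s : ℕ := r - m with hsdef
    have hms : m + s = r := by omega
    set D := Dlevel G m with hD
    have hcard : Fintype.card ↥D = D.ncard :=
      ((Set.ncard_eq_toFinset_card' D).trans (Set.toFinset_card D)).symm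
    let e : ↥D ≃ Fin D.ncard := Fintype.equivFinOfCardEq hcard
    apply Nat.sInf_le
    refine ⟨fun i => {p : ↥(cperiph G) | G.edist ↑(e.symm i) ↑p ≤ (s : ℕ∞)}, ?_, ?_⟩
    · ext p
      simp only [Set.mem_iUnion, Set.mem_univ, iff_true, Set.mem_setOf_eq]
      obtain ⟨x, hx, hxp⟩ := cover_exists hconn hUCG hr hms p.2
      refine ⟨e ⟨x, hx⟩, ?_⟩
      rw [Equiv.symm_apply_apply]
      exact hxp
    · intro i
      obtain ⟨w, hw, hdist⟩ := key_far hconn hUCG hr hm1 hms (e.symm i).2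
      have hcontr : ∀ E : ℕ∞, ((s + 2 : ℕ) : ℕ∞) ≤ E → ¬ E ≤ ((s + 1 : ℕ) : ℕ∞) := by
        intro E h1 h2
        have := h1.trans h2
        have : s + 2 ≤ s + 1 := by exact_mod_cast this
        omega
      refine ⟨⟨w, hw⟩, ?_, ?_⟩
      · intro hmem
        have hmem' : G.edist ↑(e.symm i) w ≤ (s : ℕ∞) := hmem
        exact hcontr _ hdist (hmem'.trans (by exact_mod_cast Nat.le_succ s))
      · intro q hq
        have hq' : G.edist ↑(e.symm i) ↑q ≤ (s : ℕ∞) := hq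
        apply two_le_edist_of_ne_of_not_adj
        · intro hqw
          have : (↑q : V) = w := congrArg Subtype.val hqw
          exact hcontr _ hdist (by rw [← this]; exact hq'.trans (by exact_mod_cast Nat.le_succ s))
        · intro hadj
          have hadj' : G.Adj ↑q w := hadj
          have : G.edist ↑(e.symm i) w ≤ ((s + 1 : ℕ) : ℕ∞) := by
            calc G.edist ↑(e.symm i) w ≤ G.edist ↑(e.symm i) ↑q + G.edist ↑q w :=
                  SimpleGraph.edist_triangle
              _ ≤ (s : ℕ∞) + 1 := by
                  gcongr
                  exact (SimpleGraph.edist_eq_one_iff_adj.mpr hadj').le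
              _ = ((s + 1 : ℕ) : ℕ∞) := by norm_cast
          exact hcontr _ hdist this
  -- counting
  have hdisj : ∀ m ∈ Finset.Icc 1 (r - 1), ∀ m' ∈ Finset.Icc 1 (r - 1), m ≠ m' →
      Disjoint ((Dlevel G m).toFinset) ((Dlevel G m').toFinset) := by
    intro m _ m' _ hne
    rw [Finset.disjoint_left]
    intro v hv hv'
    rw [Set.mem_toFinset] at hv hv'
    have h1 : distToCenter G v = (m : ℕ∞) := hv
    have h2 : distToCenter G v = (m' : ℕ∞) := hv'
    exact hne (by exact_mod_cast h1.symm.trans h2)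
  have hsum : ∑ m ∈ Finset.Icc 1 (r - 1), (Dlevel G m).ncard ≤ I.ncard := by
    calc ∑ m ∈ Finset.Icc 1 (r - 1), (Dlevel G m).ncard
        = ∑ m ∈ Finset.Icc 1 (r - 1), ((Dlevel G m).toFinset).card :=
          Finset.sum_congr rfl fun m _ => Set.ncard_eq_toFinset_card' _
      _ = ((Finset.Icc 1 (r - 1)).biUnion fun m => (Dlevel G m).toFinset).card :=
          (Finset.card_biUnion hdisj).symm
      _ ≤ I.toFinset.card := by
          apply Finset.card_le_card
          intro v hv
          rw [Finset.mem_biUnion] at hv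
          obtain ⟨m, hm, hvm⟩ := hv
          rw [Set.mem_toFinset] at hvm ⊢
          exact hsub m hm hvm
      _ = I.ncard := (Set.ncard_eq_toFinset_card' I).symm
  calc covA (G.induce (cperiph G)) * (r - 1)
      = ∑ _m ∈ Finset.Icc 1 (r - 1), covA (G.induce (cperiph G)) := by
        rw [Finset.sum_const, Nat.card_Icc, smul_eq_mul, mul_comm]
        congr 1
    _ ≤ ∑ m ∈ Finset.Icc 1 (r - 1), (Dlevel G m).ncard := Finset.sum_le_sum hκ
    _ ≤ I.ncard := hsum
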